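/- Two partial permutations (I,J) and (I',J') of [n] have the same cycle-path type if and only if there exists a permutation w ∈ S_n with I' = w(I) and J' = w(J) (applying w entrywise to the lists). -/

import Mathlib

/-- The successor of `v` in the graph of the partial permutation `(I,J)`:
`some j_t` if `v = i_t`, and `none` if `v` does not occur in `I`. -/
def nextV {n : ℕ} (I J : List (Fin n)) (v : Fin n) : Option (Fin n) :=
  ((I.zip J).find? (fun p => decide (p.1 = v))).map Prod.snd

/-- `m`-fold iteration of `nextV` starting from `v`. -/
def iterV {n : ℕ} (I J : List (Fin n)) (m : ℕ) (v : Fin n) : Option (Fin n) :=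
  (fun o => Option.bind o (nextV I J))^[m] (some v)

/-- `v` lies on a (directed) cycle of the graph of `(I,J)`. -/
def onCycle {n : ℕ} (I J : List (Fin n)) (v : Fin n) : Prop :=
  ∃ m : ℕ, 1 ≤ m ∧ iterV I J m v = some v

/-- `v` lies on a cycle of length exactly `m` of the graph of `(I,J)`. -/
def onCycleLen {n : ℕ} (I J : List (Fin n)) (v : Fin n) (m : ℕ) : Prop :=
  1 ≤ m ∧ iterV I J m v = some v ∧ ∀ l, 1 ≤ l → l < m → iterV I J l v ≠ some v

/-- The number of vertices lying on cycles of length `m` (this equals `m · (#m-cycles)`). -/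
noncomputable def cycVerts {n : ℕ} (I J : List (Fin n)) (m : ℕ) : ℕ :=
  Nat.card {v : Fin n // onCycleLen I J v m}

/-- The number of forward steps (plus one) available from `v`. -/
noncomputable def fwdCount {n : ℕ} (I J : List (Fin n)) (v : Fin n) : ℕ :=
  Nat.card {m : ℕ // m ≤ n ∧ (iterV I J m v).isSome}

/-- The number of vertices of the path component of a non-cyclic vertex `v`
(backwards steps are taken in the reversed graph, i.e. the graph of `(J,I)`). -/
noncomputable def pathSize {n : ℕ} (I J : List (Fin n)) (v : Fin n) : ℕ :=
  fwdCount I J v + fwdCount J I v - 1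

/-- The number of vertices lying on paths with exactly `m` vertices. -/
noncomputable def pathVerts {n : ℕ} (I J : List (Fin n)) (m : ℕ) : ℕ :=
  Nat.card {v : Fin n // ¬ onCycle I J v ∧ pathSize I J v = m}

/-- `(I,J)` and `(I',J')` have the same cycle-path type: for every `m`, they have the same
number of vertices on `m`-cycles and the same number of vertices on `m`-vertex paths. -/
def SameCyclePathType {n : ℕ} (I J I' J' : List (Fin n)) : Prop :=
  (∀ m, cycVerts I J m = cycVerts I' J' m) ∧ (∀ m, pathVerts I J m = pathVerts I' J' m)

section Basic
variable {n : ℕ} (I J : List (Fin n))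

theorem nextV_eq_some_iff (hI : I.Nodup) (hlen : I.length = J.length) {a b : Fin n} :
    nextV I J a = some b ↔ (a, b) ∈ I.zip J := by
  have hmapfst : (I.zip J).map Prod.fst = I := List.map_fst_zip (le_of_eq hlen)
  constructor
  · intro h
    unfold nextV at h
    rcases Option.map_eq_some_iff.1 h with ⟨p, hp, hsnd⟩
    have hmem := List.mem_of_find?_eq_some hp
    have hfst := List.find?_some hp
    simp only [decide_eq_true_eq] at hfst
    have : p = (a, b) := by
      cases p; simp_all
    rwa [this] at hmem
  · intro h
    have hex : ∃ p, p ∈ I.zip J ∧ (fun p : Fin n × Fin n => decide (p.1 = a)) p = true :=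
      ⟨(a, b), h, by simp⟩
    rcases List.find?_isSome.2 hex with h'
    rcases Option.isSome_iff_exists.1 h' with ⟨p, hp⟩
    have hmem := List.mem_of_find?_eq_some hp
    have hfst : p.1 = a := by
      have := List.find?_some hp; simpa using this
    have hnd : (I.zip J).Nodup := by
      have : ((I.zip J).map Prod.fst).Nodup := by rw [hmapfst]; exact hI
      exact this.of_map
    have hinj := List.inj_on_of_nodup_map (f := Prod.fst) (by rw [hmapfst]; exact hI)
    have : p = (a, b) := by
      have := hinj hmem h (by simp [hfst])
      exact this
    unfold nextV
    rw [hp, this]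
    rfl

theorem nextV_injOn (hI : I.Nodup) (hJ : J.Nodup) (hlen : I.length = J.length)
    {a b c : Fin n} (hab : nextV I J a = some c) (hbc : nextV I J b = some c) : a = b := by
  have h1 := (nextV_eq_some_iff I J hI hlen).1 hab
  have h2 := (nextV_eq_some_iff I J hI hlen).1 hbc
  have hmapsnd : (I.zip J).map Prod.snd = J := List.map_snd_zip hlen.ge
  have hinj := List.inj_on_of_nodup_map (f := Prod.snd) (l := I.zip J)
    (by rw [hmapsnd]; exact hJ)
  have := hinj h1 h2 (by simp)
  exact congrArg Prod.fst this

theorem nextV_swap (hI : I.Nodup) (hJ : J.Nodup) (hlen : I.length = J.length) {a b : Fin n} :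
    nextV I J a = some b ↔ nextV J I b = some a := by
  rw [nextV_eq_some_iff I J hI hlen, nextV_eq_some_iff J I hJ hlen.symm]
  constructor
  · intro h
    have hs := List.zip_swap I J
    have : ((b, a) : Fin n × Fin n) ∈ (I.zip J).map Prod.swap :=
      List.mem_map.2 ⟨(a,b), h, rfl⟩
    rwa [hs] at this
  · intro h
    have hs := List.zip_swap J I
    have : ((a, b) : Fin n × Fin n) ∈ (J.zip I).map Prod.swap :=
      List.mem_map.2 ⟨(b,a), h, rfl⟩
    rwa [hs] at this

theorem iterV_zero (v : Fin n) : iterV I J 0 v = some v := rfl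

theorem iterV_one (v : Fin n) : iterV I J 1 v = nextV I J v := rfl

theorem iterV_add (a b : ℕ) (v : Fin n) :
    iterV I J (a + b) v = (iterV I J a v).bind (fun u => iterV I J b u) := by
  unfold iterV
  rw [add_comm, Function.iterate_add_apply]
  cases h : (fun o => Option.bind o (nextV I J))^[a] (some v) with
  | none =>
    simp only [Option.bind_none]
    induction b with
    | zero => rfl
    | succ b ih => rw [Function.iterate_succ_apply', ih]; rfl
  | some u => rfl

theorem iterV_succ (a : ℕ) (v : Fin n) :
    iterV I J (a + 1) v = (iterV I J a v).bind (nextV I J) := by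
  rw [iterV_add]; rfl

theorem iterV_succ' (a : ℕ) (v : Fin n) :
    iterV I J (a + 1) v = (nextV I J v).bind (fun u => iterV I J a u) := by
  rw [show a + 1 = 1 + a by omega, iterV_add, iterV_one]

end Basic

section Struct
variable {n : ℕ}

theorem iterV_none_le {I J : List (Fin n)} {a b : ℕ} {v : Fin n}
    (hab : a ≤ b) (h : iterV I J a v = none) : iterV I J b v = none := by
  have : iterV I J (a + (b - a)) v = none := by
    rw [iterV_add, h]; rfl
  rwa [Nat.add_sub_cancel' hab] at this

theorem iterV_isSome_mono {I J : List (Fin n)} {a b : ℕ} {v : Fin n}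
    (hab : a ≤ b) (h : (iterV I J b v).isSome) : (iterV I J a v).isSome := by
  by_contra h'
  rw [Option.not_isSome_iff_eq_none] at h'
  rw [iterV_none_le hab h'] at h
  simp at h

theorem iterV_mul_self {I J : List (Fin n)} {p : ℕ} {v : Fin n}
    (h : iterV I J p v = some v) (c : ℕ) : iterV I J (c * p) v = some v := by
  induction c with
  | zero => rw [Nat.zero_mul]; rfl
  | succ c ih =>
    rw [Nat.succ_mul, iterV_add, ih]
    exact h

theorem onCycle_of_nextV {I J : List (Fin n)} (hI : I.Nodup) (hJ : J.Nodup)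
    (hlen : I.length = J.length) {x u : Fin n}
    (hfx : nextV I J x = some u) (hu : onCycle I J u) : onCycle I J x := by
  rcases hu with ⟨p, hp1, hpu⟩
  have h1 : iterV I J ((p - 1) + 1) u = some u := by rwa [Nat.sub_add_cancel hp1]
  rw [iterV_succ] at h1
  rcases Option.bind_eq_some_iff.1 h1 with ⟨y, hy, hfy⟩
  have hxy : x = y := nextV_injOn I J hI hJ hlen hfx hfy
  refine ⟨p, hp1, ?_⟩
  have : iterV I J (1 + (p - 1)) x = some x := by
    rw [iterV_add, iterV_one, hfx]
    simp only [Option.bind_some]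
    rw [hxy]
    exact hy
  rwa [show 1 + (p - 1) = p by omega] at this

theorem onCycle_of_iterV {I J : List (Fin n)} (hI : I.Nodup) (hJ : J.Nodup)
    (hlen : I.length = J.length) {a : ℕ} {v u : Fin n}
    (h : iterV I J a v = some u) (hu : onCycle I J u) : onCycle I J v := by
  induction a generalizing v with
  | zero =>
    have : v = u := by simpa [iterV_zero] using h
    rwa [this]
  | succ a ih =>
    rw [iterV_succ'] at h
    rcases Option.bind_eq_some_iff.1 h with ⟨x, hx, hxa⟩
    exact onCycle_of_nextV hI hJ hlen hx (ih hxa)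

theorem onCycle_iterV {I J : List (Fin n)} {a : ℕ} {v u : Fin n}
    (hv : onCycle I J v) (h : iterV I J a v = some u) : onCycle I J u := by
  rcases hv with ⟨p, hp1, hpv⟩
  refine ⟨p, hp1, ?_⟩
  have h1 : iterV I J (a + p) v = iterV I J p u := by
    rw [iterV_add, h]; rfl
  have h2 : iterV I J (p + a) v = some u := by
    rw [iterV_add, hpv]
    simpa using h
  rw [← h1, add_comm]
  exact h2

theorem iterV_isSome_of_onCycle {I J : List (Fin n)} {v : Fin n}
    (hv : onCycle I J v) (k : ℕ) : (iterV I J k v).isSome := by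
  rcases hv with ⟨p, hp1, hpv⟩
  have : iterV I J ((k + 1) * p) v = some v := iterV_mul_self hpv (k + 1)
  have hk : k ≤ (k + 1) * p := by nlinarith
  exact iterV_isSome_mono hk (by rw [this]; rfl)

theorem iterV_ne_of_not_onCycle {I J : List (Fin n)} (hI : I.Nodup) (hJ : J.Nodup)
    (hlen : I.length = J.length) {v u : Fin n} {a b : ℕ}
    (hv : ¬ onCycle I J v) (hab : a < b) (ha : iterV I J a v = some u) :
    iterV I J b v ≠ some u := by
  intro hb
  have h1 : iterV I J (b - a) u = some u := by
    have : iterV I J (a + (b - a)) v = (some u).bind (fun x => iterV I J (b - a) x) := by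
      rw [iterV_add, ha]
    rw [Nat.add_sub_cancel' hab.le, hb] at this
    simpa using this.symm
  have hu : onCycle I J u := ⟨b - a, by omega, h1⟩
  exact hv (onCycle_of_iterV hI hJ hlen ha hu)

theorem exists_iterV_none {I J : List (Fin n)} (hI : I.Nodup) (hJ : J.Nodup)
    (hlen : I.length = J.length) {v : Fin n} (hv : ¬ onCycle I J v) :
    ∃ k, k ≤ n ∧ iterV I J k v = none := by
  by_contra h
  push_neg at h
  have hsome : ∀ k : Fin (n + 1), (iterV I J k v).isSome := by
    intro k
    rcases Option.ne_none_iff_isSome.1 (h k (by omega)) with hs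
    exact hs
  set φ : Fin (n + 1) → Fin n := fun k => (iterV I J k v).get (hsome k) with hφ
  have hinj : Function.Injective φ := by
    intro a b hab
    by_contra hne
    rcases Nat.lt_or_ge (a : ℕ) (b : ℕ) with hl | hl
    · exact iterV_ne_of_not_onCycle hI hJ hlen hv hl (Option.eq_some_of_isSome (hsome a))
        (by rw [Option.eq_some_of_isSome (hsome b), Option.some_inj]; exact hab.symm)
    · have hl' : (b : ℕ) < (a : ℕ) := by
        rcases Nat.lt_or_ge (b : ℕ) (a : ℕ) with h1 | h1
        · exact h1
        · exact absurd (Fin.ext (le_antisymm h1 hl)) hne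
      exact iterV_ne_of_not_onCycle hI hJ hlen hv hl' (Option.eq_some_of_isSome (hsome b))
        (by rw [Option.eq_some_of_isSome (hsome a), Option.some_inj]; exact hab)
  have := Fintype.card_le_of_injective φ hinj
  simp at this

end Struct

section Steps
open scoped Classical
variable {n : ℕ}

theorem iterV_swap {I J : List (Fin n)} (hI : I.Nodup) (hJ : J.Nodup)
    (hlen : I.length = J.length) {k : ℕ} {a b : Fin n}
    (h : iterV I J k a = some b) : iterV J I k b = some a := by
  induction k generalizing a with
  | zero =>
    have : a = b := by simpa [iterV_zero] using h
    rw [this]; rfl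
  | succ k ih =>
    rw [iterV_succ'] at h
    rcases Option.bind_eq_some_iff.1 h with ⟨x, hx, hxk⟩
    have h1 : nextV J I x = some a := (nextV_swap I J hI hJ hlen).1 hx
    have h2 := ih hxk
    rw [iterV_succ, h2]
    exact h1

theorem onCycle_swap {I J : List (Fin n)} (hI : I.Nodup) (hJ : J.Nodup)
    (hlen : I.length = J.length) {v : Fin n} :
    onCycle I J v ↔ onCycle J I v := by
  constructor
  · rintro ⟨p, hp1, hp⟩
    exact ⟨p, hp1, iterV_swap hI hJ hlen hp⟩
  · rintro ⟨p, hp1, hp⟩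
    exact ⟨p, hp1, iterV_swap hJ hI hlen.symm hp⟩

/-- Number of forward steps until falling off (is `Nat.find` when defined). -/
noncomputable def stepsD {n : ℕ} (I J : List (Fin n)) (v : Fin n) : ℕ :=
  if h : ∃ k, iterV I J k v = none then Nat.find h else 0

theorem stepsD_spec {I J : List (Fin n)} {v : Fin n}
    (h : ∃ k, iterV I J k v = none) : iterV I J (stepsD I J v) v = none := by
  classical
  rw [stepsD, dif_pos h]
  exact Nat.find_spec h

theorem stepsD_pos {I J : List (Fin n)} (v : Fin n) : 1 ≤ stepsD I J v ∨ stepsD I J v = 0 := by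
  omega

theorem isSome_of_lt_stepsD {I J : List (Fin n)} {v : Fin n} {k : ℕ}
    (h : ∃ m, iterV I J m v = none) (hk : k < stepsD I J v) : (iterV I J k v).isSome := by
  classical
  classical
  rw [stepsD, dif_pos h] at hk
  have := Nat.find_min h hk
  exact Option.ne_none_iff_isSome.1 this

theorem stepsD_pos' {I J : List (Fin n)} {v : Fin n}
    (h : ∃ m, iterV I J m v = none) : 1 ≤ stepsD I J v := by
  rcases Nat.eq_zero_or_pos (stepsD I J v) with h0 | h1
  · exfalso
    have := stepsD_spec h
    rw [h0] at this
    simp [iterV_zero] at this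
  · exact h1

theorem isSome_iff_lt_stepsD {I J : List (Fin n)} {v : Fin n} {k : ℕ}
    (h : ∃ m, iterV I J m v = none) : (iterV I J k v).isSome ↔ k < stepsD I J v := by
  constructor
  · intro hs
    by_contra hk
    push_neg at hk
    have := iterV_none_le hk (stepsD_spec h)
    rw [this] at hs; simp at hs
  · exact isSome_of_lt_stepsD h

theorem exists_none_of_not_onCycle {I J : List (Fin n)} (hI : I.Nodup) (hJ : J.Nodup)
    (hlen : I.length = J.length) {v : Fin n} (hv : ¬ onCycle I J v) :
    ∃ k, iterV I J k v = none := by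
  rcases exists_iterV_none hI hJ hlen hv with ⟨k, _, hk⟩
  exact ⟨k, hk⟩

theorem stepsD_le_n {I J : List (Fin n)} (hI : I.Nodup) (hJ : J.Nodup)
    (hlen : I.length = J.length) {v : Fin n} (hv : ¬ onCycle I J v) :
    stepsD I J v ≤ n := by
  rcases exists_iterV_none hI hJ hlen hv with ⟨k, hkn, hk⟩
  have h : ∃ k, iterV I J k v = none := ⟨k, hk⟩
  classical
  rw [stepsD, dif_pos h]
  exact le_trans (Nat.find_le hk) hkn

theorem fwdCount_eq_stepsD {I J : List (Fin n)} (hI : I.Nodup) (hJ : J.Nodup)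
    (hlen : I.length = J.length) {v : Fin n} (hv : ¬ onCycle I J v) :
    fwdCount I J v = stepsD I J v := by
  have h : ∃ k, iterV I J k v = none := exists_none_of_not_onCycle hI hJ hlen hv
  have hiff : ∀ m : ℕ, (m ≤ n ∧ (iterV I J m v).isSome) ↔ m < stepsD I J v := by
    intro m
    constructor
    · rintro ⟨_, hs⟩
      exact (isSome_iff_lt_stepsD h).1 hs
    · intro hm
      refine ⟨?_, isSome_of_lt_stepsD h hm⟩
      have := stepsD_le_n hI hJ hlen hv
      omega
  rw [fwdCount]
  rw [Nat.card_congr ((Equiv.subtypeEquivRight hiff).trans (Fin.equivSubtype).symm)]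
  simp

theorem stepsD_step {I J : List (Fin n)} (hI : I.Nodup) (hJ : J.Nodup)
    (hlen : I.length = J.length) {x u : Fin n} (hx : ¬ onCycle I J x)
    (hfx : nextV I J x = some u) : stepsD I J x = stepsD I J u + 1 := by
  have hu : ¬ onCycle I J u := fun hc => hx (onCycle_of_nextV hI hJ hlen hfx hc)
  have hiter : ∀ k, iterV I J (k + 1) x = iterV I J k u := by
    intro k
    rw [iterV_succ', hfx]
    rfl
  have hex : ∃ k, iterV I J k x = none := exists_none_of_not_onCycle hI hJ hlen hx
  have heu : ∃ k, iterV I J k u = none := exists_none_of_not_onCycle hI hJ hlen hu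
  classical
  rw [stepsD, dif_pos hex]
  rw [Nat.find_eq_iff hex]
  constructor
  · rw [hiter]
    exact stepsD_spec heu
  · intro k hk
    match k with
    | 0 => simp [iterV_zero]
    | k + 1 =>
      rw [hiter]
      have : k < stepsD I J u := by omega
      have := isSome_of_lt_stepsD heu this
      intro hc
      rw [hc] at this; simp at this

theorem stepsD_of_iterV {I J : List (Fin n)} (hI : I.Nodup) (hJ : J.Nodup)
    (hlen : I.length = J.length) {s v : Fin n} {k : ℕ} (hs : ¬ onCycle I J s)
    (h : iterV I J k s = some v) : stepsD I J s = stepsD I J v + k := by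
  induction k generalizing s with
  | zero =>
    have : s = v := by simpa [iterV_zero] using h
    rw [this]
    omega
  | succ k ih =>
    rw [iterV_succ'] at h
    rcases Option.bind_eq_some_iff.1 h with ⟨x, hfx, hxk⟩
    have hx : ¬ onCycle I J x := fun hc => hs (onCycle_of_nextV hI hJ hlen hfx hc)
    rw [stepsD_step hI hJ hlen hs hfx, ih hx hxk]
    omega

end Steps

section Paths
variable {n : ℕ}

/-- `s` is the start of a path component. -/
def IsStart {n : ℕ} (I J : List (Fin n)) (s : Fin n) : Prop :=
  ¬ onCycle I J s ∧ nextV J I s = none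

noncomputable def backN {n : ℕ} (I J : List (Fin n)) (v : Fin n) : ℕ :=
  stepsD J I v - 1

noncomputable def startV {n : ℕ} (I J : List (Fin n)) (v : Fin n) : Fin n :=
  (iterV J I (backN I J v) v).getD v

variable {I J : List (Fin n)}

theorem not_onCycle_swap (hI : I.Nodup) (hJ : J.Nodup) (hlen : I.length = J.length) {v : Fin n} (hv : ¬ onCycle I J v) : ¬ onCycle J I v :=
  fun hc => hv ((onCycle_swap hI hJ hlen).2 hc)

theorem iterV_back_eq_start (hI : I.Nodup) (hJ : J.Nodup) (hlen : I.length = J.length) {v : Fin n} (hv : ¬ onCycle I J v) :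
    iterV J I (backN I J v) v = some (startV I J v) := by
  have hvJI : ¬ onCycle J I v := not_onCycle_swap hI hJ hlen hv
  have hex : ∃ k, iterV J I k v = none := exists_none_of_not_onCycle hJ hI hlen.symm hvJI
  have hpos := stepsD_pos' hex
  have hlt : backN I J v < stepsD J I v := by simp only [backN]; omega
  have hs := isSome_of_lt_stepsD hex hlt
  rw [startV, Option.getD_of_ne_none (Option.ne_none_iff_isSome.2 hs)]

theorem iterV_start_eq (hI : I.Nodup) (hJ : J.Nodup) (hlen : I.length = J.length) {v : Fin n} (hv : ¬ onCycle I J v) :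
    iterV I J (backN I J v) (startV I J v) = some v :=
  iterV_swap hJ hI hlen.symm (iterV_back_eq_start hI hJ hlen hv)

theorem start_not_onCycle (hI : I.Nodup) (hJ : J.Nodup) (hlen : I.length = J.length) {v : Fin n} (hv : ¬ onCycle I J v) :
    ¬ onCycle I J (startV I J v) :=
  fun hc => hv (onCycle_iterV hc (iterV_start_eq hI hJ hlen hv))

theorem nextV_start_eq_none (hI : I.Nodup) (hJ : J.Nodup) (hlen : I.length = J.length) {v : Fin n} (hv : ¬ onCycle I J v) :
    nextV J I (startV I J v) = none := by
  have hvJI : ¬ onCycle J I v := not_onCycle_swap hI hJ hlen hv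
  have hex : ∃ k, iterV J I k v = none := exists_none_of_not_onCycle hJ hI hlen.symm hvJI
  have hpos := stepsD_pos' hex
  have h1 : iterV J I (backN I J v + 1) v = none := by
    have : backN I J v + 1 = stepsD J I v := by simp only [backN]; omega
    rw [this]
    exact stepsD_spec hex
  rw [iterV_succ, iterV_back_eq_start hI hJ hlen hv] at h1
  simpa using h1

theorem isStart_startV (hI : I.Nodup) (hJ : J.Nodup) (hlen : I.length = J.length) {v : Fin n} (hv : ¬ onCycle I J v) : IsStart I J (startV I J v) :=
  ⟨start_not_onCycle hI hJ hlen hv, nextV_start_eq_none hI hJ hlen hv⟩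

theorem stepsD_JI_eq_one {s : Fin n} (hs : ¬ onCycle I J s) (hgs : nextV J I s = none) :
    stepsD J I s = 1 := by
  have h1 : iterV J I 1 s = none := by rw [iterV_one]; exact hgs
  have hex : ∃ k, iterV J I k s = none := ⟨1, h1⟩
  classical
  rw [stepsD, dif_pos hex, Nat.find_eq_iff hex]
  refine ⟨h1, ?_⟩
  intro k hk
  interval_cases k
  simp [iterV_zero]

theorem stepsD_JI_start (hI : I.Nodup) (hJ : J.Nodup) (hlen : I.length = J.length) {v : Fin n} (hv : ¬ onCycle I J v) :
    stepsD J I v = backN I J v + 1 := by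
  have hvJI : ¬ onCycle J I v := not_onCycle_swap hI hJ hlen hv
  have hex : ∃ k, iterV J I k v = none := exists_none_of_not_onCycle hJ hI hlen.symm hvJI
  have hpos := stepsD_pos' hex
  simp only [backN]; omega

theorem stepsD_IJ_start (hI : I.Nodup) (hJ : J.Nodup) (hlen : I.length = J.length) {v : Fin n} (hv : ¬ onCycle I J v) :
    stepsD I J (startV I J v) = stepsD I J v + backN I J v :=
  stepsD_of_iterV hI hJ hlen (start_not_onCycle hI hJ hlen hv)
    (iterV_start_eq hI hJ hlen hv)

theorem pathSize_eq_stepsD (hI : I.Nodup) (hJ : J.Nodup) (hlen : I.length = J.length) {v : Fin n} (hv : ¬ onCycle I J v) :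
    pathSize I J v = stepsD I J v + stepsD J I v - 1 := by
  rw [pathSize, fwdCount_eq_stepsD hI hJ hlen hv,
    fwdCount_eq_stepsD hJ hI hlen.symm (not_onCycle_swap hI hJ hlen hv)]

theorem stepsD_IJ_pos (hI : I.Nodup) (hJ : J.Nodup) (hlen : I.length = J.length) {v : Fin n} (hv : ¬ onCycle I J v) : 1 ≤ stepsD I J v :=
  stepsD_pos' (exists_none_of_not_onCycle hI hJ hlen hv)

theorem stepsD_JI_pos (hI : I.Nodup) (hJ : J.Nodup) (hlen : I.length = J.length) {v : Fin n} (hv : ¬ onCycle I J v) : 1 ≤ stepsD J I v :=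
  stepsD_pos' (exists_none_of_not_onCycle hJ hI hlen.symm (not_onCycle_swap hI hJ hlen hv))

theorem pathSize_startV (hI : I.Nodup) (hJ : J.Nodup) (hlen : I.length = J.length) {v : Fin n} (hv : ¬ onCycle I J v) :
    pathSize I J (startV I J v) = pathSize I J v := by
  have hst := start_not_onCycle hI hJ hlen hv
  rw [pathSize_eq_stepsD hI hJ hlen hst, pathSize_eq_stepsD hI hJ hlen hv,
    stepsD_IJ_start hI hJ hlen hv,
    stepsD_JI_eq_one hst (nextV_start_eq_none hI hJ hlen hv),
    stepsD_JI_start hI hJ hlen hv]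
  omega

theorem backN_lt_pathSize (hI : I.Nodup) (hJ : J.Nodup) (hlen : I.length = J.length) {v : Fin n} (hv : ¬ onCycle I J v) :
    backN I J v < pathSize I J v := by
  rw [pathSize_eq_stepsD hI hJ hlen hv, stepsD_JI_start hI hJ hlen hv]
  have := stepsD_IJ_pos hI hJ hlen hv
  omega

theorem pathSize_start_eq_stepsD (hI : I.Nodup) (hJ : J.Nodup) (hlen : I.length = J.length) {s : Fin n} (hs : IsStart I J s) :
    pathSize I J s = stepsD I J s := by
  rw [pathSize_eq_stepsD hI hJ hlen hs.1, stepsD_JI_eq_one hs.1 hs.2]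
  omega

/-- Properties of the `k`-th vertex on the path starting at `s`. -/
theorem path_point (hI : I.Nodup) (hJ : J.Nodup) (hlen : I.length = J.length) {s u : Fin n} {k : ℕ} (hs : IsStart I J s)
    (hu : iterV I J k s = some u) :
    ¬ onCycle I J u ∧ startV I J u = s ∧ backN I J u = k ∧
      pathSize I J u = pathSize I J s := by
  have hnc : ¬ onCycle I J u := by
    intro hc
    exact hs.1 (onCycle_of_iterV hI hJ hlen hu hc)
  have hback : iterV J I k u = some s := iterV_swap hI hJ hlen hu
  have hDg : stepsD J I u = 1 + k := by
    have := stepsD_of_iterV hJ hI hlen.symm (not_onCycle_swap hI hJ hlen hnc) hback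
    rw [this, stepsD_JI_eq_one hs.1 hs.2]
  have hbn : backN I J u = k := by simp only [backN, hDg]; omega
  have hstart : startV I J u = s := by
    rw [startV, hbn, hback]
    rfl
  have hDf : stepsD I J s = stepsD I J u + k := stepsD_of_iterV hI hJ hlen hs.1 hu
  refine ⟨hnc, hstart, hbn, ?_⟩
  rw [pathSize_eq_stepsD hI hJ hlen hnc, pathSize_start_eq_stepsD hI hJ hlen hs, hDf, hDg]
  have := stepsD_IJ_pos hI hJ hlen hnc
  omega

/-- The path component bijection: vertices on `m`-vertex paths ≃ (starts of size `m`) × Fin m. -/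
noncomputable def pathEquiv (hI : I.Nodup) (hJ : J.Nodup) (hlen : I.length = J.length) (m : ℕ) :
    {v : Fin n // ¬ onCycle I J v ∧ pathSize I J v = m} ≃
      {s : Fin n // IsStart I J s ∧ pathSize I J s = m} × Fin m where
  toFun v := by
    refine ⟨⟨startV I J v.1, isStart_startV hI hJ hlen v.2.1, ?_⟩,
      ⟨backN I J v.1, ?_⟩⟩
    · rw [pathSize_startV hI hJ hlen v.2.1, v.2.2]
    · have h1 := backN_lt_pathSize hI hJ hlen v.2.1
      have h2 := v.2.2
      omega
  invFun p := by
    refine ⟨(iterV I J (p.2 : ℕ) p.1.1).getD p.1.1, ?_⟩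
    have hlt : (p.2 : ℕ) < stepsD I J p.1.1 := by
      rw [← pathSize_start_eq_stepsD hI hJ hlen p.1.2.1, p.1.2.2]
      exact p.2.2
    have hex : ∃ k, iterV I J k p.1.1 = none :=
      exists_none_of_not_onCycle hI hJ hlen p.1.2.1.1
    have hsome := isSome_of_lt_stepsD hex hlt
    have hiter : iterV I J (p.2 : ℕ) p.1.1 = some ((iterV I J (p.2 : ℕ) p.1.1).getD p.1.1) := by
      rw [Option.getD_of_ne_none (Option.ne_none_iff_isSome.2 hsome)]
    have := path_point hI hJ hlen p.1.2.1 hiter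
    exact ⟨this.1, by rw [this.2.2.2, p.1.2.2]⟩
  left_inv := by
    rintro ⟨v, hv, hm⟩
    have h1 := iterV_start_eq hI hJ hlen hv
    simp only [Subtype.mk.injEq]
    rw [h1]
    rfl
  right_inv := by
    rintro ⟨⟨s, hs, hm⟩, ⟨k, hk⟩⟩
    have hlt : k < stepsD I J s := by
      rw [← pathSize_start_eq_stepsD hI hJ hlen hs, hm]; exact hk
    have hex : ∃ j, iterV I J j s = none := exists_none_of_not_onCycle hI hJ hlen hs.1
    have hsome := isSome_of_lt_stepsD hex hlt
    have hiter : iterV I J k s = some ((iterV I J k s).getD s) := by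
      rw [Option.getD_of_ne_none (Option.ne_none_iff_isSome.2 hsome)]
    have hp := path_point hI hJ hlen hs hiter
    simp only [Prod.mk.injEq, Subtype.mk.injEq]
    exact ⟨hp.2.1, by simp [hp.2.2.1]⟩

theorem pathVerts_eq (hI : I.Nodup) (hJ : J.Nodup) (hlen : I.length = J.length) (m : ℕ) :
    pathVerts I J m = Nat.card {s : Fin n // IsStart I J s ∧ pathSize I J s = m} * m := by
  rw [pathVerts, Nat.card_congr (pathEquiv hI hJ hlen m), Nat.card_prod]
  simp

end Paths

section Cycles
open scoped Classical
variable {n : ℕ} {I J : List (Fin n)}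

theorem iterV_mod {v : Fin n} {m : ℕ} (h : onCycleLen I J v m) (k : ℕ) :
    iterV I J k v = iterV I J (k % m) v := by
  conv_lhs => rw [show k = m * (k / m) + k % m from (Nat.div_add_mod k m).symm]
  rw [iterV_add, mul_comm, iterV_mul_self h.2.1]
  rfl

theorem onCycleLen_iterV {v u : Fin n} {m k : ℕ} (h : onCycleLen I J v m)
    (hk : iterV I J k v = some u) : onCycleLen I J u m := by
  have hmem : onCycle I J v := ⟨m, h.1, h.2.1⟩
  have hperiod : iterV I J m u = some u := by
    have h1 : iterV I J (m + k) v = some u := by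
      rw [iterV_add, h.2.1]; simpa using hk
    have h2 : iterV I J (k + m) v = iterV I J m u := by
      rw [iterV_add, hk]; rfl
    rw [← h2, add_comm]; exact h1
  -- find k' with iterV k' u = some v
  have hback : ∃ k', iterV I J k' u = some v := by
    rcases Nat.eq_zero_or_pos (k % m) with h0 | hpos
    · have hvv : iterV I J k v = some v := by rw [iterV_mod h, h0]; rfl
      have huv : u = v := by rw [hvv] at hk; exact (Option.some_inj.1 hk).symm
      exact ⟨0, by rw [huv]; rfl⟩
    · refine ⟨m - k % m, ?_⟩
      have hm1 : 1 ≤ m := h.1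
      have h1 : iterV I J (k + (m - k % m)) v = iterV I J (m - k % m) u := by
        rw [iterV_add, hk]; rfl
      have hk' : k % m < m := Nat.mod_lt _ (by omega)
      have h2 : (k + (m - k % m)) % m = 0 := by
        have hdm := Nat.div_add_mod k m
        have hmm : m * (k / m + 1) = m * (k / m) + m := by ring
        have : k + (m - k % m) = m * (k / m + 1) := by omega
        rw [this, Nat.mul_mod_right]
      have h3 : iterV I J (k + (m - k % m)) v = some v := by
        rw [iterV_mod h, h2]; rfl
      rw [← h1, h3]
  rcases hback with ⟨k', hk'⟩
  refine ⟨h.1, hperiod, ?_⟩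
  intro l hl1 hlm hc
  have hlv : iterV I J l v = some v := by
    have h1 : iterV I J (k' + l) u = iterV I J l v := by
      rw [iterV_add, hk']; rfl
    have h2 : iterV I J (l + k') u = some v := by
      rw [iterV_add, hc]; simpa using hk'
    rw [← h1, add_comm]; exact h2
  exact h.2.2 l hl1 hlm hlv

theorem iterV_inj_of_onCycleLen {v : Fin n} {m i j : ℕ} (h : onCycleLen I J v m)
    (hi : i < m) (hj : j < m) (hij : iterV I J i v = iterV I J j v) : i = j := by
  by_contra hne
  wlog hlt : i < j generalizing i j
  · exact this hj hi hij.symm (Ne.symm hne) (by omega)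
  have hs : (iterV I J i v).isSome := iterV_isSome_of_onCycle ⟨m, h.1, h.2.1⟩ i
  set u := (iterV I J i v).get hs with hu
  have hiu : iterV I J i v = some u := (Option.some_get hs).symm
  have hju : iterV I J j v = some u := by rw [← hij]; exact hiu
  have h1 : iterV I J (j - i) u = some u := by
    have : iterV I J (i + (j - i)) v = iterV I J (j - i) u := by
      rw [iterV_add, hiu]; rfl
    rw [Nat.add_sub_cancel' hlt.le] at this
    rw [← this, hju]
  have hu_len : onCycleLen I J u m := onCycleLen_iterV h hiu
  exact hu_len.2.2 (j - i) (by omega) (by omega) h1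

/-- minimal cycle length -/
noncomputable def cycLen {n : ℕ} (I J : List (Fin n)) (v : Fin n) : ℕ :=
  if h : ∃ m, 1 ≤ m ∧ iterV I J m v = some v then Nat.find h else 0

theorem onCycleLen_cycLen {v : Fin n} (h : onCycle I J v) :
    onCycleLen I J v (cycLen I J v) := by
  have h' : ∃ m, 1 ≤ m ∧ iterV I J m v = some v := h
  rw [cycLen, dif_pos h']
  exact ⟨(Nat.find_spec h').1, (Nat.find_spec h').2,
    fun l hl1 hlm hc => Nat.find_min h' hlm ⟨hl1, hc⟩⟩

theorem onCycleLen_unique {v : Fin n} {m m' : ℕ} (h : onCycleLen I J v m)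
    (h' : onCycleLen I J v m') : m = m' := by
  rcases Nat.lt_trichotomy m m' with hlt | he | hgt
  · exact absurd h.2.1 (h'.2.2 m h.1 hlt)
  · exact he
  · exact absurd h'.2.1 (h.2.2 m' h'.1 hgt)

theorem cycLen_eq {v : Fin n} {m : ℕ} (h : onCycleLen I J v m) : cycLen I J v = m :=
  onCycleLen_unique (onCycleLen_cycLen ⟨m, h.1, h.2.1⟩) h

/-- Same-cycle relation on vertices of cycles of length `m`. -/
def cycSetoid (I J : List (Fin n)) (m : ℕ) : Setoid {v : Fin n // onCycleLen I J v m} where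
  r x y := ∃ k, iterV I J k x.1 = some y.1
  iseqv := by
    constructor
    · intro x; exact ⟨0, rfl⟩
    · rintro x y ⟨k, hk⟩
      have h := x.2
      rcases Nat.eq_zero_or_pos (k % m) with h0 | hpos
      · have h1 : iterV I J k x.1 = some x.1 := by rw [iterV_mod h, h0]; rfl
        have : y.1 = x.1 := by rw [h1] at hk; simpa using hk.symm
        exact ⟨0, by rw [this]; rfl⟩
      · refine ⟨m - k % m, ?_⟩
        have hm1 : 1 ≤ m := h.1
        have h1 : iterV I J (k + (m - k % m)) x.1 = iterV I J (m - k % m) y.1 := by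
          rw [iterV_add, hk]; rfl
        have hk' : k % m < m := Nat.mod_lt _ (by omega)
        have h2 : (k + (m - k % m)) % m = 0 := by
          have hdm := Nat.div_add_mod k m
          have hmm : m * (k / m + 1) = m * (k / m) + m := by ring
          have : k + (m - k % m) = m * (k / m + 1) := by omega
          rw [this, Nat.mul_mod_right]
        have h3 : iterV I J (k + (m - k % m)) x.1 = some x.1 := by
          rw [iterV_mod h, h2]; rfl
        rw [← h1, h3]
    · rintro x y z ⟨k, hk⟩ ⟨l, hl⟩
      refine ⟨k + l, ?_⟩
      rw [iterV_add, hk]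
      simpa using hl

/-- The set of `m`-cycles. -/
def cycQuot (I J : List (Fin n)) (m : ℕ) : Type :=
  Quotient (cycSetoid I J m)

theorem exists_iter_out {m : ℕ} (x : {v : Fin n // onCycleLen I J v m}) :
    ∃ k, iterV I J k (Quotient.mk (cycSetoid I J m) x).out.1 = some x.1 :=
  Quotient.mk_out (s := cycSetoid I J m) x

noncomputable def posC {m : ℕ} (x : {v : Fin n // onCycleLen I J v m}) : ℕ :=
  Nat.find (exists_iter_out x)

theorem posC_spec {m : ℕ} (x : {v : Fin n // onCycleLen I J v m}) :
    iterV I J (posC x) (Quotient.mk (cycSetoid I J m) x).out.1 = some x.1 :=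
  Nat.find_spec (exists_iter_out x)

theorem posC_min {m : ℕ} (x : {v : Fin n // onCycleLen I J v m}) {k : ℕ}
    (hk : iterV I J k (Quotient.mk (cycSetoid I J m) x).out.1 = some x.1) : posC x ≤ k :=
  Nat.find_le hk

theorem posC_lt {m : ℕ} (hm : 1 ≤ m) (x : {v : Fin n // onCycleLen I J v m}) : posC x < m := by
  have hout := (Quotient.mk (cycSetoid I J m) x).out.2
  have hk := posC_spec x
  have h1 : iterV I J (posC x % m) (Quotient.mk (cycSetoid I J m) x).out.1 = some x.1 := by
    rw [← iterV_mod hout]; exact hk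
  have h2 := posC_min x h1
  have h3 : posC x % m < m := Nat.mod_lt _ (by omega)
  omega

end Cycles

section CycEquiv
open scoped Classical
variable {n : ℕ} {I J : List (Fin n)}

instance cycQuot_finite (m : ℕ) : Finite (cycQuot I J m) :=
  Quotient.finite _

theorem posC_eq {m : ℕ} (hm : 1 ≤ m) (x : {v : Fin n // onCycleLen I J v m}) {k : ℕ}
    (hk : k < m) (h : iterV I J k (Quotient.mk (cycSetoid I J m) x).out.1 = some x.1) :
    posC x = k := by
  have h1 := posC_spec x
  have h3 := posC_lt hm x
  exact iterV_inj_of_onCycleLen (Quotient.mk (cycSetoid I J m) x).out.2 h3 hk (by rw [h1, h])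

noncomputable def cycEquiv (m : ℕ) (hm : 1 ≤ m) :
    {v : Fin n // onCycleLen I J v m} ≃ cycQuot I J m × Fin m where
  toFun x := (Quotient.mk _ x, ⟨posC x, posC_lt hm x⟩)
  invFun p := ⟨(iterV I J (p.2 : ℕ) p.1.out.1).get
      (iterV_isSome_of_onCycle ⟨m, p.1.out.2.1, p.1.out.2.2.1⟩ _),
    onCycleLen_iterV p.1.out.2 (Option.some_get _).symm⟩
  left_inv := by
    intro x
    apply Subtype.ext
    have h := posC_spec x
    simp only [h, Option.get_some]
  right_inv := by
    rintro ⟨q, k, hk⟩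
    have hsome : (iterV I J k q.out.1).isSome :=
      iterV_isSome_of_onCycle ⟨m, q.out.2.1, q.out.2.2.1⟩ _
    set e : {v : Fin n // onCycleLen I J v m} :=
      ⟨(iterV I J k q.out.1).get hsome, onCycleLen_iterV q.out.2 (Option.some_get _).symm⟩
      with he
    have hrel : (cycSetoid I J m).r q.out e := ⟨k, (Option.some_get hsome).symm⟩
    have hq : Quotient.mk (cycSetoid I J m) e = q := by
      rw [← Quotient.out_eq q]
      exact (Quotient.sound hrel).symm
    have hiter : iterV I J k (Quotient.mk (cycSetoid I J m) e).out.1 = some e.1 := by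
      rw [hq]
      exact (Option.some_get hsome).symm
    have hpos : posC e = k := posC_eq hm e hk hiter
    simp only [Prod.mk.injEq]
    exact Prod.ext hq (Fin.ext hpos)

theorem cycVerts_eq (m : ℕ) (hm : 1 ≤ m) :
    cycVerts I J m = Nat.card (cycQuot I J m) * m := by
  rw [cycVerts, Nat.card_congr (cycEquiv m hm), Nat.card_prod]
  simp

/-- value formula for the inverse of `cycEquiv` -/
theorem cycEquiv_symm_val (m : ℕ) (hm : 1 ≤ m) (p : cycQuot I J m × Fin m) :
    iterV I J (p.2 : ℕ) p.1.out.1 = some (((cycEquiv m hm).symm p).1) := by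
  rcases p with ⟨q, k⟩
  exact (Option.some_get _).symm

/-- The next vertex on a cycle: class and position. -/
theorem posC_succ {m : ℕ} (hm : 1 ≤ m) (x : {v : Fin n // onCycleLen I J v m}) {u : Fin n}
    (hu : nextV I J x.1 = some u) (hul : onCycleLen I J u m) :
    Quotient.mk (cycSetoid I J m) (⟨u, hul⟩ : {v : Fin n // onCycleLen I J v m}) =
      Quotient.mk (cycSetoid I J m) x ∧
    posC (⟨u, hul⟩ : {v : Fin n // onCycleLen I J v m}) = (posC x + 1) % m := by
  have hrel : (cycSetoid I J m).r x ⟨u, hul⟩ := ⟨1, by rw [iterV_one]; exact hu⟩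
  have hq : Quotient.mk (cycSetoid I J m) (⟨u, hul⟩ : {v : Fin n // onCycleLen I J v m}) =
      Quotient.mk (cycSetoid I J m) x := (Quotient.sound hrel).symm
  refine ⟨hq, ?_⟩
  have hout := (Quotient.mk (cycSetoid I J m) x).out.2
  have h1 : iterV I J (posC x + 1) (Quotient.mk (cycSetoid I J m) x).out.1 = some u := by
    rw [iterV_succ, posC_spec x]
    simpa using hu
  have h2 : iterV I J ((posC x + 1) % m) (Quotient.mk (cycSetoid I J m) x).out.1 = some u := by
    rw [← iterV_mod hout]
    exact h1
  apply posC_eq hm _ (Nat.mod_lt _ (by omega))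
  rw [hq]
  exact h2

end CycEquiv

section ConstructW
open scoped Classical
variable {n : ℕ} {I J I' J' : List (Fin n)}

theorem one_le_pathSize (hI : I.Nodup) (hJ : J.Nodup) (hlen : I.length = J.length)
    {v : Fin n} (hv : ¬ onCycle I J v) : 1 ≤ pathSize I J v := by
  have h1 := stepsD_IJ_pos hI hJ hlen hv
  have h2 := stepsD_JI_pos hI hJ hlen hv
  rw [pathSize_eq_stepsD hI hJ hlen hv]
  omega

theorem pathEquiv_symm_val (hI : I.Nodup) (hJ : J.Nodup) (hlen : I.length = J.length)
    (m : ℕ) (p : {s : Fin n // IsStart I J s ∧ pathSize I J s = m} × Fin m) :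
    iterV I J (p.2 : ℕ) p.1.1 = some (((pathEquiv hI hJ hlen m).symm p).1) := by
  rcases p with ⟨S, k⟩
  have hlt : (k : ℕ) < stepsD I J S.1 := by
    rw [← pathSize_start_eq_stepsD hI hJ hlen S.2.1, S.2.2]
    exact k.2
  have hex : ∃ j, iterV I J j S.1 = none := exists_none_of_not_onCycle hI hJ hlen S.2.1.1
  have hsome := isSome_of_lt_stepsD hex hlt
  show iterV I J (k : ℕ) S.1 = some ((iterV I J (k : ℕ) S.1).getD S.1)
  rw [Option.getD_of_ne_none (Option.ne_none_iff_isSome.2 hsome)]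

theorem nextV_isSome_of_onCycleLen {v : Fin n} {m : ℕ} (hm : onCycleLen I J v m) :
    (nextV I J v).isSome := by
  have := iterV_isSome_of_onCycle ⟨m, hm.1, hm.2.1⟩ 1
  rwa [iterV_one] at this

/-- the conjugating map determined by chosen bijections on cycles and path starts. -/
noncomputable def wmap (hI : I.Nodup) (hJ : J.Nodup) (hlen : I.length = J.length)
    (hI' : I'.Nodup) (hJ' : J'.Nodup) (hlen' : I'.length = J'.length)
    (CE : ∀ m, 1 ≤ m → (cycQuot I J m ≃ cycQuot I' J' m))
    (SE : ∀ m, 1 ≤ m → ({s : Fin n // IsStart I J s ∧ pathSize I J s = m} ≃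
        {s : Fin n // IsStart I' J' s ∧ pathSize I' J' s = m}))
    (v : Fin n) : Fin n :=
  if h : onCycle I J v then
    ((cycEquiv (I := I') (J := J') (cycLen I J v) (onCycleLen_cycLen h).1).symm
      (Prod.map (CE (cycLen I J v) (onCycleLen_cycLen h).1) id
        (cycEquiv (cycLen I J v) (onCycleLen_cycLen h).1 ⟨v, onCycleLen_cycLen h⟩))).1
  else
    ((pathEquiv hI' hJ' hlen' (pathSize I J v)).symm
      (Prod.map (SE (pathSize I J v) (one_le_pathSize hI hJ hlen h)) id
        (pathEquiv hI hJ hlen (pathSize I J v) ⟨v, h, rfl⟩))).1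

variable (hI : I.Nodup) (hJ : J.Nodup) (hlen : I.length = J.length)
  (hI' : I'.Nodup) (hJ' : J'.Nodup) (hlen' : I'.length = J'.length)
  (CE : ∀ m, 1 ≤ m → (cycQuot I J m ≃ cycQuot I' J' m))
  (SE : ∀ m, 1 ≤ m → ({s : Fin n // IsStart I J s ∧ pathSize I J s = m} ≃
      {s : Fin n // IsStart I' J' s ∧ pathSize I' J' s = m}))

theorem wmap_cyc_eval {v : Fin n} {m : ℕ} (hm : onCycleLen I J v m) :
    wmap hI hJ hlen hI' hJ' hlen' CE SE v =
      ((cycEquiv (I := I') (J := J') m hm.1).symm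
        (Prod.map (CE m hm.1) id (cycEquiv m hm.1 ⟨v, hm⟩))).1 := by
  have h : onCycle I J v := ⟨m, hm.1, hm.2.1⟩
  obtain rfl : m = cycLen I J v := (cycLen_eq hm).symm
  rw [wmap, dif_pos h]

theorem wmap_path_eval {v : Fin n} (hv : ¬ onCycle I J v) {m : ℕ} (hm : pathSize I J v = m)
    (hm1 : 1 ≤ m) :
    wmap hI hJ hlen hI' hJ' hlen' CE SE v =
      ((pathEquiv hI' hJ' hlen' m).symm
        (Prod.map (SE m hm1) id (pathEquiv hI hJ hlen m ⟨v, hv, hm⟩))).1 := by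
  obtain rfl : m = pathSize I J v := hm.symm
  rw [wmap, dif_neg hv]

theorem wmap_cyc_mem {v : Fin n} {m : ℕ} (hm : onCycleLen I J v m) :
    onCycleLen I' J' (wmap hI hJ hlen hI' hJ' hlen' CE SE v) m := by
  rw [wmap_cyc_eval hI hJ hlen hI' hJ' hlen' CE SE hm]
  exact (((cycEquiv (I := I') (J := J') m hm.1).symm
    (Prod.map (CE m hm.1) id (cycEquiv m hm.1 ⟨v, hm⟩)))).2

theorem wmap_path_mem {v : Fin n} (hv : ¬ onCycle I J v) {m : ℕ} (hm : pathSize I J v = m)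
    (hm1 : 1 ≤ m) :
    ¬ onCycle I' J' (wmap hI hJ hlen hI' hJ' hlen' CE SE v) ∧
      pathSize I' J' (wmap hI hJ hlen hI' hJ' hlen' CE SE v) = m := by
  rw [wmap_path_eval hI hJ hlen hI' hJ' hlen' CE SE hv hm hm1]
  exact (((pathEquiv hI' hJ' hlen' m).symm
    (Prod.map (SE m hm1) id (pathEquiv hI hJ hlen m ⟨v, hv, hm⟩)))).2

theorem wmap_inj : Function.Injective (wmap hI hJ hlen hI' hJ' hlen' CE SE) := by
  intro v1 v2 heq
  by_cases h1 : onCycle I J v1 <;> by_cases h2 : onCycle I J v2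
  · -- both on cycles
    have hm1 := onCycleLen_cycLen h1
    have hm2 := onCycleLen_cycLen h2
    have hw1 := wmap_cyc_mem hI hJ hlen hI' hJ' hlen' CE SE hm1
    have hw2 := wmap_cyc_mem hI hJ hlen hI' hJ' hlen' CE SE hm2
    rw [heq] at hw1
    have hmm : cycLen I J v1 = cycLen I J v2 := onCycleLen_unique hw1 hw2
    set m := cycLen I J v2 with hmdef
    rw [hmm] at hm1
    have he1 := wmap_cyc_eval hI hJ hlen hI' hJ' hlen' CE SE hm1
    have he2 := wmap_cyc_eval hI hJ hlen hI' hJ' hlen' CE SE hm2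
    rw [he1, he2] at heq
    have heq2 : ((cycEquiv (I := I') (J := J') m hm1.1).symm
        (Prod.map (CE m hm1.1) id (cycEquiv m hm1.1 ⟨v1, hm1⟩))) =
        ((cycEquiv (I := I') (J := J') m hm2.1).symm
        (Prod.map (CE m hm2.1) id (cycEquiv m hm2.1 ⟨v2, hm2⟩))) := Subtype.ext heq
    have heq3 := (cycEquiv (I := I') (J := J') m hm1.1).symm.injective heq2
    have hfst := congrArg Prod.fst heq3
    have hsnd := congrArg Prod.snd heq3
    simp only [Prod.map_fst, Prod.map_snd, id] at hfst hsnd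
    have hfst2 : (cycEquiv m hm1.1 ⟨v1, hm1⟩).1 = (cycEquiv m hm2.1 ⟨v2, hm2⟩).1 :=
      (CE m hm1.1).injective hfst
    have : cycEquiv m hm1.1 ⟨v1, hm1⟩ = cycEquiv m hm2.1 ⟨v2, hm2⟩ := Prod.ext hfst2 hsnd
    have := (cycEquiv m hm1.1).injective this
    exact congrArg Subtype.val this
  · exfalso
    have hw1 := wmap_cyc_mem hI hJ hlen hI' hJ' hlen' CE SE (onCycleLen_cycLen h1)
    have hw2 := (wmap_path_mem hI hJ hlen hI' hJ' hlen' CE SE h2 rfl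
      (one_le_pathSize hI hJ hlen h2)).1
    rw [heq] at hw1
    exact hw2 ⟨_, hw1.1, hw1.2.1⟩
  · exfalso
    have hw2 := wmap_cyc_mem hI hJ hlen hI' hJ' hlen' CE SE (onCycleLen_cycLen h2)
    have hw1 := (wmap_path_mem hI hJ hlen hI' hJ' hlen' CE SE h1 rfl
      (one_le_pathSize hI hJ hlen h1)).1
    rw [← heq] at hw2
    exact hw1 ⟨_, hw2.1, hw2.2.1⟩
  · -- both paths
    have hp1 := wmap_path_mem hI hJ hlen hI' hJ' hlen' CE SE h1 rfl
      (one_le_pathSize hI hJ hlen h1)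
    have hp2 := wmap_path_mem hI hJ hlen hI' hJ' hlen' CE SE h2 rfl
      (one_le_pathSize hI hJ hlen h2)
    have hmm : pathSize I J v1 = pathSize I J v2 := by
      rw [← hp1.2, ← hp2.2, heq]
    set m := pathSize I J v2 with hmdef
    have hm1 : 1 ≤ m := one_le_pathSize hI hJ hlen h2
    have he1 := wmap_path_eval hI hJ hlen hI' hJ' hlen' CE SE h1 hmm hm1
    have he2 := wmap_path_eval hI hJ hlen hI' hJ' hlen' CE SE h2 rfl hm1
    rw [he1, he2] at heq
    have heq2 := Subtype.ext heq
    have heq3 := (pathEquiv hI' hJ' hlen' m).symm.injective heq2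
    have hfst := congrArg Prod.fst heq3
    have hsnd := congrArg Prod.snd heq3
    simp only [Prod.map_fst, Prod.map_snd, id] at hfst hsnd
    have hfst2 := (SE m hm1).injective hfst
    have : pathEquiv hI hJ hlen m ⟨v1, h1, hmm⟩ = pathEquiv hI hJ hlen m ⟨v2, h2, rfl⟩ :=
      Prod.ext hfst2 hsnd
    have := (pathEquiv hI hJ hlen m).injective this
    exact congrArg Subtype.val this

end ConstructW

section ConjW
open scoped Classical
variable {n : ℕ} {I J I' J' : List (Fin n)}
variable (hI : I.Nodup) (hJ : J.Nodup) (hlen : I.length = J.length)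
  (hI' : I'.Nodup) (hJ' : J'.Nodup) (hlen' : I'.length = J'.length)
  (CE : ∀ m, 1 ≤ m → (cycQuot I J m ≃ cycQuot I' J' m))
  (SE : ∀ m, 1 ≤ m → ({s : Fin n // IsStart I J s ∧ pathSize I J s = m} ≃
      {s : Fin n // IsStart I' J' s ∧ pathSize I' J' s = m}))

theorem wmap_conj (v : Fin n) :
    nextV I' J' (wmap hI hJ hlen hI' hJ' hlen' CE SE v) =
      (nextV I J v).map (wmap hI hJ hlen hI' hJ' hlen' CE SE) := by
  set w := wmap hI hJ hlen hI' hJ' hlen' CE SE with hwdef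
  by_cases h : onCycle I J v
  · -- cycle case
    have hm := onCycleLen_cycLen h
    set m := cycLen I J v with hmdef
    have hm1 : 1 ≤ m := hm.1
    have hsome : (nextV I J v).isSome := nextV_isSome_of_onCycleLen hm
    set u := (nextV I J v).get hsome with hudef
    have hfv : nextV I J v = some u := (Option.some_get hsome).symm
    have hul : onCycleLen I J u m := onCycleLen_iterV hm (by rw [iterV_one]; exact hfv)
    obtain ⟨hclass, hpos⟩ := posC_succ hm1 ⟨v, hm⟩ hfv hul
    set x : {a : Fin n // onCycleLen I J a m} := ⟨v, hm⟩ with hxdef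
    set Q : cycQuot I' J' m := CE m hm1 (Quotient.mk (cycSetoid I J m) x) with hQdef
    have he_v : w v = ((cycEquiv (I := I') (J := J') m hm1).symm
        (Q, ⟨posC x, posC_lt hm1 x⟩)).1 :=
      wmap_cyc_eval hI hJ hlen hI' hJ' hlen' CE SE hm
    have h1 : iterV I' J' (posC x) Q.out.1 = some (w v) := by
      rw [he_v]
      exact cycEquiv_symm_val m hm1 (Q, ⟨posC x, posC_lt hm1 x⟩)
    have hmodlt : (posC x + 1) % m < m := Nat.mod_lt _ (by omega)
    have he_u : w u = ((cycEquiv (I := I') (J := J') m hm1).symm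
        (CE m hm1 (Quotient.mk (cycSetoid I J m) ⟨u, hul⟩), ⟨posC ⟨u, hul⟩,
          posC_lt hm1 ⟨u, hul⟩⟩)).1 :=
      wmap_cyc_eval hI hJ hlen hI' hJ' hlen' CE SE hul
    have hPair : ((CE m hm1 (Quotient.mk (cycSetoid I J m) ⟨u, hul⟩) : cycQuot I' J' m),
        (⟨posC ⟨u, hul⟩, posC_lt hm1 ⟨u, hul⟩⟩ : Fin m)) =
        (Q, (⟨(posC x + 1) % m, hmodlt⟩ : Fin m)) := by
      refine Prod.ext ?_ ?_
      · rw [hQdef]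
        exact congrArg (CE m hm1) hclass
      · exact Fin.ext hpos
    rw [hPair] at he_u
    have h2 : iterV I' J' ((posC x + 1) % m) Q.out.1 = some (w u) := by
      rw [he_u]
      exact cycEquiv_symm_val m hm1 (Q, ⟨(posC x + 1) % m, hmodlt⟩)
    have h3 : iterV I' J' (posC x + 1) Q.out.1 = nextV I' J' (w v) := by
      rw [iterV_succ, h1]
      rfl
    have h4 : iterV I' J' (posC x + 1) Q.out.1 = iterV I' J' ((posC x + 1) % m) Q.out.1 :=
      iterV_mod Q.out.2 _
    rw [hfv]
    rw [← h3, h4, h2]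
    rfl
  · -- path case
    have hm1 : 1 ≤ pathSize I J v := one_le_pathSize hI hJ hlen h
    set m := pathSize I J v with hmdef
    set b := backN I J v with hbdef
    have hb : b < m := backN_lt_pathSize hI hJ hlen h
    set S : {s : Fin n // IsStart I J s ∧ pathSize I J s = m} :=
      ⟨startV I J v, isStart_startV hI hJ hlen h, by
        rw [pathSize_startV hI hJ hlen h]⟩ with hSdef
    set S' := SE m hm1 S with hS'def
    have he_v : w v = ((pathEquiv hI' hJ' hlen' m).symm (S', ⟨b, hb⟩)).1 :=
      wmap_path_eval hI hJ hlen hI' hJ' hlen' CE SE h rfl hm1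
    have h1 : iterV I' J' b S'.1 = some (w v) := by
      rw [he_v]
      exact pathEquiv_symm_val hI' hJ' hlen' m (S', ⟨b, hb⟩)
    have h3 : iterV I' J' (b + 1) S'.1 = nextV I' J' (w v) := by
      rw [iterV_succ, h1]
      rfl
    cases hfv : nextV I J v with
    | some u =>
      have hiter_u : iterV I J (b + 1) S.1 = some u := by
        rw [iterV_succ, iterV_start_eq hI hJ hlen h]
        simp [hfv]
      have hp := path_point hI hJ hlen S.2.1 hiter_u
      have hpu : pathSize I J u = m := by rw [hp.2.2.2, S.2.2]
      have hb1 : b + 1 < m := by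
        have h5 := backN_lt_pathSize hI hJ hlen hp.1
        rw [hp.2.2.1, hpu] at h5
        exact h5
      have he_u : w u = ((pathEquiv hI' hJ' hlen' m).symm
          (SE m hm1 ⟨startV I J u, isStart_startV hI hJ hlen hp.1, by
              rw [pathSize_startV hI hJ hlen hp.1, hpu]⟩,
            ⟨backN I J u, by
              have h5 := backN_lt_pathSize hI hJ hlen hp.1
              rw [hpu] at h5
              exact h5⟩)).1 :=
        wmap_path_eval hI hJ hlen hI' hJ' hlen' CE SE hp.1 hpu hm1
      have hPair : ((SE m hm1 ⟨startV I J u, isStart_startV hI hJ hlen hp.1, by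
              rw [pathSize_startV hI hJ hlen hp.1, hpu]⟩ :
            {s : Fin n // IsStart I' J' s ∧ pathSize I' J' s = m}),
          (⟨backN I J u, by
              have h5 := backN_lt_pathSize hI hJ hlen hp.1
              rw [hpu] at h5
              exact h5⟩ : Fin m)) = (S', (⟨b + 1, hb1⟩ : Fin m)) := by
        refine Prod.ext ?_ ?_
        · rw [hS'def]
          exact congrArg (SE m hm1) (Subtype.ext hp.2.1)
        · exact Fin.ext hp.2.2.1
      rw [hPair] at he_u
      have h2 : iterV I' J' (b + 1) S'.1 = some (w u) := by
        rw [he_u]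
        exact pathEquiv_symm_val hI' hJ' hlen' m (S', ⟨b + 1, hb1⟩)
      rw [← h3, h2]
      rfl
    | none =>
      have hD : stepsD I J v = 1 :=
        stepsD_JI_eq_one (not_onCycle_swap hI hJ hlen h) hfv
      have hmb : m = b + 1 := by
        have h5 := pathSize_eq_stepsD hI hJ hlen h
        have h6 := stepsD_JI_start hI hJ hlen h
        rw [← hmdef] at h5
        rw [← hbdef] at h6
        omega
      have hSsteps : stepsD I' J' S'.1 = m := by
        rw [← pathSize_start_eq_stepsD hI' hJ' hlen' S'.2.1, S'.2.2]
      have hex' : ∃ k, iterV I' J' k S'.1 = none :=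
        exists_none_of_not_onCycle hI' hJ' hlen' S'.2.1.1
      have hnone : iterV I' J' (b + 1) S'.1 = none := by
        rw [← hmb]
        have h5 := stepsD_spec hex'
        rw [hSsteps] at h5
        exact h5
      rw [← h3, hnone]
      rfl

end ConjW

section Bridge
variable {n : ℕ} {I J I' J' : List (Fin n)}

theorem zip_nodup (hI : I.Nodup) (hlen : I.length = J.length) : (I.zip J).Nodup := by
  have : ((I.zip J).map Prod.fst).Nodup := by
    rw [List.map_fst_zip (le_of_eq hlen)]
    exact hI
  exact this.of_map

theorem multiset_eq_iff_conj (hI : I.Nodup) (hJ : J.Nodup) (hI' : I'.Nodup) (hJ' : J'.Nodup)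
    (hlen : I.length = J.length) (hlen' : I'.length = J'.length) (w : Equiv.Perm (Fin n)) :
    (((I.map ⇑w).zip (J.map ⇑w) : List (Fin n × Fin n)) : Multiset (Fin n × Fin n)) =
        ((I'.zip J' : List (Fin n × Fin n)) : Multiset (Fin n × Fin n)) ↔
      ∀ v, nextV I' J' (w v) = (nextV I J v).map ⇑w := by
  have hz : (I.map ⇑w).zip (J.map ⇑w) = (I.zip J).map (Prod.map ⇑w ⇑w) :=
    List.zip_map
  have hnd1 : ((I.zip J).map (Prod.map ⇑w ⇑w)).Nodup := by
    refine (zip_nodup hI hlen).map ?_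
    intro p q hpq
    have h1 : w p.1 = w q.1 := congrArg Prod.fst hpq
    have h2 : w p.2 = w q.2 := congrArg Prod.snd hpq
    exact Prod.ext (w.injective h1) (w.injective h2)
  have hnd2 : (I'.zip J').Nodup := zip_nodup hI' hlen'
  rw [hz, Multiset.coe_eq_coe, List.perm_ext_iff_of_nodup hnd1 hnd2]
  constructor
  · intro hmem v
    cases hfv : nextV I J v with
    | some u =>
      have h1 : (v, u) ∈ I.zip J := (nextV_eq_some_iff I J hI hlen).1 hfv
      have h2 : (w v, w u) ∈ (I.zip J).map (Prod.map ⇑w ⇑w) :=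
        List.mem_map.2 ⟨(v, u), h1, rfl⟩
      have h3 := (hmem _).1 h2
      rw [(nextV_eq_some_iff I' J' hI' hlen').2 h3]
      rfl
    | none =>
      simp only [Option.map_none]
      cases hfv' : nextV I' J' (w v) with
      | none => rfl
      | some u' =>
        exfalso
        have h1 : (w v, u') ∈ I'.zip J' := (nextV_eq_some_iff I' J' hI' hlen').1 hfv'
        have h2 := (hmem _).2 h1
        rcases List.mem_map.1 h2 with ⟨⟨a, b⟩, hab, habe⟩
        have ha : w a = w v := congrArg Prod.fst habe
        have ha2 : a = v := w.injective ha
        have : nextV I J v = some b := by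
          rw [← ha2]
          exact (nextV_eq_some_iff I J hI hlen).2 hab
        rw [this] at hfv
        simp at hfv
  · intro hconj p
    constructor
    · intro hp
      rcases List.mem_map.1 hp with ⟨⟨a, b⟩, hab, rfl⟩
      have h1 : nextV I J a = some b := (nextV_eq_some_iff I J hI hlen).2 hab
      have h2 : nextV I' J' (w a) = some (w b) := by
        rw [hconj a, h1]
        rfl
      exact (nextV_eq_some_iff I' J' hI' hlen').1 h2
    · intro hp
      rcases p with ⟨a', b'⟩
      have h1 : nextV I' J' a' = some b' := (nextV_eq_some_iff I' J' hI' hlen').2 hp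
      have h2 := hconj (w.symm a')
      rw [w.apply_symm_apply] at h2
      rw [h1] at h2
      cases hfb : nextV I J (w.symm a') with
      | none => rw [hfb] at h2; simp at h2
      | some b =>
        rw [hfb] at h2
        have hb : w b = b' := by
          simpa using h2.symm
        refine List.mem_map.2 ⟨(w.symm a', b), (nextV_eq_some_iff I J hI hlen).1 hfb, ?_⟩
        simp [Prod.map, hb]

theorem iterV_conj (w : Equiv.Perm (Fin n))
    (hconj : ∀ v, nextV I' J' (w v) = (nextV I J v).map ⇑w) (k : ℕ) (v : Fin n) :
    iterV I' J' k (w v) = (iterV I J k v).map ⇑w := by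
  induction k generalizing v with
  | zero => rfl
  | succ k ih =>
    rw [iterV_succ', iterV_succ', hconj v]
    cases hfv : nextV I J v with
    | none => rfl
    | some t => exact ih t

theorem nextV_swap_conj (hI : I.Nodup) (hJ : J.Nodup) (hI' : I'.Nodup) (hJ' : J'.Nodup)
    (hlen : I.length = J.length) (hlen' : I'.length = J'.length) (w : Equiv.Perm (Fin n))
    (hconj : ∀ v, nextV I' J' (w v) = (nextV I J v).map ⇑w) (v : Fin n) :
    nextV J' I' (w v) = (nextV J I v).map ⇑w := by
  cases hgv : nextV J I v with
  | some t =>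
    have h1 : nextV I J t = some v := (nextV_swap I J hI hJ hlen).2 hgv
    have h2 : nextV I' J' (w t) = some (w v) := by rw [hconj t, h1]; rfl
    have h3 : nextV J' I' (w v) = some (w t) := (nextV_swap I' J' hI' hJ' hlen').1 h2
    rw [h3]; rfl
  | none =>
    simp only [Option.map_none]
    cases hgv' : nextV J' I' (w v) with
    | none => rfl
    | some t' =>
      exfalso
      have h1 : nextV I' J' t' = some (w v) := (nextV_swap I' J' hI' hJ' hlen').2 hgv'
      have h2 := hconj (w.symm t')
      rw [w.apply_symm_apply, h1] at h2
      cases hft : nextV I J (w.symm t') with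
      | none => rw [hft] at h2; simp at h2
      | some z =>
        rw [hft] at h2
        have hz : z = v := w.injective (by simpa using h2.symm)
        have : nextV J I v = some (w.symm t') := by
          apply (nextV_swap I J hI hJ hlen).1
          rw [← hz]
          exact hft
        rw [this] at hgv
        simp at hgv

theorem sameCyclePathType_of_conj (hI : I.Nodup) (hJ : J.Nodup) (hI' : I'.Nodup)
    (hJ' : J'.Nodup) (hlen : I.length = J.length) (hlen' : I'.length = J'.length)
    (w : Equiv.Perm (Fin n))
    (hconj : ∀ v, nextV I' J' (w v) = (nextV I J v).map ⇑w) :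
    SameCyclePathType I J I' J' := by
  have hgconj : ∀ v, nextV J' I' (w v) = (nextV J I v).map ⇑w :=
    nextV_swap_conj hI hJ hI' hJ' hlen hlen' w hconj
  have hiter := iterV_conj w hconj
  have hgiter := iterV_conj (I := J) (J := I) (I' := J') (J' := I') w hgconj
  have hsome_iff : ∀ k v, iterV I' J' k (w v) = some (w v) ↔ iterV I J k v = some v := by
    intro k v
    rw [hiter k v]
    cases hkv : iterV I J k v with
    | none => simp
    | some t =>
      simp only [Option.map_some, Option.some_inj]
      exact ⟨fun ht => by rw [w.injective ht], fun ht => by rw [ht]⟩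
  have hlen_iff : ∀ v m, onCycleLen I' J' (w v) m ↔ onCycleLen I J v m := by
    intro v m
    unfold onCycleLen
    rw [hsome_iff]
    constructor
    · rintro ⟨h1, h2, h3⟩
      exact ⟨h1, h2, fun l hl1 hlm hc => h3 l hl1 hlm ((hsome_iff l v).2 hc)⟩
    · rintro ⟨h1, h2, h3⟩
      exact ⟨h1, h2, fun l hl1 hlm hc => h3 l hl1 hlm ((hsome_iff l v).1 hc)⟩
  have hcyc_iff : ∀ v, onCycle I' J' (w v) ↔ onCycle I J v := by
    intro v
    unfold onCycle
    constructor
    · rintro ⟨m, h1, h2⟩; exact ⟨m, h1, (hsome_iff m v).1 h2⟩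
    · rintro ⟨m, h1, h2⟩; exact ⟨m, h1, (hsome_iff m v).2 h2⟩
  have hfwd : ∀ v, fwdCount I' J' (w v) = fwdCount I J v := by
    intro v
    unfold fwdCount
    apply Nat.card_congr
    apply Equiv.subtypeEquivRight
    intro k
    rw [hiter k v]
    cases iterV I J k v <;> simp
  have hbwd : ∀ v, fwdCount J' I' (w v) = fwdCount J I v := by
    intro v
    unfold fwdCount
    apply Nat.card_congr
    apply Equiv.subtypeEquivRight
    intro k
    rw [hgiter k v]
    cases iterV J I k v <;> simp
  have hps : ∀ v, pathSize I' J' (w v) = pathSize I J v := by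
    intro v
    unfold pathSize
    rw [hfwd, hbwd]
  constructor
  · intro m
    unfold cycVerts
    apply Nat.card_congr
    exact Equiv.subtypeEquiv (w : Fin n ≃ Fin n) (fun v => (hlen_iff v m).symm)
  · intro m
    unfold pathVerts
    apply Nat.card_congr
    refine Equiv.subtypeEquiv (w : Fin n ≃ Fin n) (fun v => ?_)
    rw [hcyc_iff v, hps v]

end Bridge

/-- Two partial permutations of `[n]` have the same cycle-path type if and only if some
`w ∈ S_n` carries one to the other, i.e. `(w(I), w(J)) = (I', J')` as partial permutations
(equality of the edge data up to simultaneous reordering). -/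
theorem sameCyclePathType_iff_exists_perm {n : ℕ} (I J I' J' : List (Fin n))
    (hI : I.Nodup) (hJ : J.Nodup) (hI' : I'.Nodup) (hJ' : J'.Nodup)
    (hlen : I.length = J.length) (hlen' : I'.length = J'.length) :
    SameCyclePathType I J I' J' ↔
      ∃ w : Equiv.Perm (Fin n),
        (((I.map ⇑w).zip (J.map ⇑w) : List (Fin n × Fin n)) : Multiset (Fin n × Fin n)) =
          ((I'.zip J' : List (Fin n × Fin n)) : Multiset (Fin n × Fin n)) := by
  constructor
  · intro hSame
    classical
    have hCE : ∀ m, 1 ≤ m → Nonempty (cycQuot I J m ≃ cycQuot I' J' m) := by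
      intro m hm
      apply Finite.card_eq.mp
      have h1 := cycVerts_eq (I := I) (J := J) m hm
      have h2 := cycVerts_eq (I := I') (J := J') m hm
      have h3 := hSame.1 m
      rw [h1, h2] at h3
      exact Nat.eq_of_mul_eq_mul_right (by omega) h3
    have hSE : ∀ m, 1 ≤ m →
        Nonempty ({s : Fin n // IsStart I J s ∧ pathSize I J s = m} ≃
          {s : Fin n // IsStart I' J' s ∧ pathSize I' J' s = m}) := by
      intro m hm
      apply Finite.card_eq.mp
      have h1 := pathVerts_eq hI hJ hlen m
      have h2 := pathVerts_eq hI' hJ' hlen' m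
      have h3 := hSame.2 m
      rw [h1, h2] at h3
      exact Nat.eq_of_mul_eq_mul_right (by omega) h3
    set CE : ∀ m, 1 ≤ m → (cycQuot I J m ≃ cycQuot I' J' m) :=
      fun m hm => (hCE m hm).some with hCEdef
    set SE : ∀ m, 1 ≤ m → ({s : Fin n // IsStart I J s ∧ pathSize I J s = m} ≃
        {s : Fin n // IsStart I' J' s ∧ pathSize I' J' s = m}) :=
      fun m hm => (hSE m hm).some with hSEdef
    have hinj := wmap_inj hI hJ hlen hI' hJ' hlen' CE SE
    have hbij := Finite.injective_iff_bijective.1 hinj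
    refine ⟨Equiv.ofBijective _ hbij, ?_⟩
    rw [multiset_eq_iff_conj hI hJ hI' hJ' hlen hlen']
    intro v
    exact wmap_conj hI hJ hlen hI' hJ' hlen' CE SE v
  · rintro ⟨w, hw⟩
    exact sameCyclePathType_of_conj hI hJ hI' hJ' hlen hlen' w
      ((multiset_eq_iff_conj hI hJ hI' hJ' hlen hlen' w).1 hw)
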